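/- Let d ≥ 2 be even, q an odd prime power, and C ⊂ F_q^{d+1} the homogeneous variety x_1²+...+x_{d-1}² = x_d x_{d+1}. With K(m) = (dσ_c)^∨(m) − δ_0(m), one has the uniform bound ‖G ∗ K‖_{L^∞(F_q^{d+1})} ≤ q^{−d/2} ‖G‖_{L^1(F_q^{d+1}, counting)} for all G : F_q^{d+1} → ℂ. -/

import Mathlib

open Finset

section Aux

variable {F : Type} [Field F] [Fintype F] [DecidableEq F]

private lemma achar_sum_prod {ι : Type*} (χ : AddChar F ℂ) (s : Finset ι) (f : ι → F) :
    χ (∑ i ∈ s, f i) = ∏ i ∈ s, χ (f i) := by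
  induction s using Finset.cons_induction with
  | empty => simp
  | cons i s hi ih => rw [Finset.sum_cons, Finset.prod_cons, AddChar.map_add_eq_mul, ih]

private lemma delta_sum (χ : AddChar F ℂ) (hχ : χ ≠ 1) (r : F) :
    ∑ t : F, χ (r * t) = if r = 0 then (Fintype.card F : ℂ) else 0 := by
  split_ifs with h
  · subst h
    simp [Finset.card_univ]
  · have hp := AddChar.IsPrimitive.of_ne_one hχ (a := r) h
    simpa using AddChar.sum_eq_zero_of_ne_one hp

private noncomputable def ηc (F : Type) [Field F] [Fintype F] [DecidableEq F] :
    MulChar F ℂ :=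
  (quadraticChar F).ringHomComp (Int.castRingHom ℂ)

private lemma ηc_apply (a : F) : ηc F a = ((quadraticChar F a : ℤ) : ℂ) := rfl

private lemma ηc_zero : ηc F 0 = 0 := by
  simp [ηc_apply]

private lemma ηc_sq {t : F} (ht : t ≠ 0) : ηc F t * ηc F t = 1 := by
  rw [ηc_apply, ← Int.cast_mul, ← pow_two, quadraticChar_sq_one ht, Int.cast_one]

private lemma ηc_ne_zero {t : F} (ht : t ≠ 0) : ηc F t ≠ 0 := by
  intro h
  have h2 := ηc_sq ht
  rw [h, mul_zero] at h2
  exact zero_ne_one h2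

private lemma ηc_inv {t : F} (ht : t ≠ 0) : ηc F t⁻¹ = ηc F t := by
  have h1 : ηc F t * ηc F t⁻¹ = 1 := by
    rw [← map_mul, mul_inv_cancel₀ ht, map_one]
  have h2 := ηc_sq ht
  exact mul_left_cancel₀ (ηc_ne_zero ht) (h1.trans h2.symm)

private lemma ηc_abs_le_one (a : F) : ‖ηc F a‖ ≤ 1 := by
  rcases quadraticChar_isQuadratic F a with h | h | h <;>
    simp [ηc_apply, h]

private lemma ηc_sum_zero (hchar : ringChar F ≠ 2) : ∑ a : F, ηc F a = 0 := by
  have h := quadraticChar_sum_zero hchar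
  simp only [ηc_apply]
  rw [← Int.cast_sum, h, Int.cast_zero]

private lemma gaussSum_def (χ : AddChar F ℂ) :
    gaussSum (ηc F) χ = ∑ a : F, ηc F a * χ a := rfl

/-- Quadratic Gauss sum with linear twist. -/
private lemma quad_sum (hchar : ringChar F ≠ 2) (χ : AddChar F ℂ) (hχ : χ ≠ 1)
    {t : F} (ht : t ≠ 0) (a : F) :
    ∑ z : F, χ (t * z ^ 2 + a * z) =
      χ (-(a ^ 2) * (4 * t)⁻¹) * (ηc F t * gaussSum (ηc F) χ) := by
  have h2 : (2 : F) ≠ 0 := Ring.two_ne_zero hchar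
  have h4 : (4 : F) ≠ 0 := by
    have h : (4 : F) = 2 * 2 := by norm_num
    rw [h]
    exact mul_ne_zero h2 h2
  have step1 : ∑ z : F, χ (t * z ^ 2 + a * z) =
      ∑ z : F, χ (-(a ^ 2) * (4 * t)⁻¹) * χ (t * z ^ 2) := by
    refine Fintype.sum_equiv (Equiv.addRight (a * (2 * t)⁻¹)) _ _ (fun z => ?_)
    rw [← AddChar.map_add_eq_mul]
    congr 1
    simp only [Equiv.coe_addRight]
    field_simp
    ring
  rw [step1, ← Finset.mul_sum]
  congr 1
  have count : ∀ w : F, ((univ.filter fun z : F => z ^ 2 = w).card : ℂ) = ηc F w + 1 := by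
    intro w
    have h := quadraticChar_card_sqrts hchar w
    have h' : ({x : F | x ^ 2 = w}.toFinset) = univ.filter fun z : F => z ^ 2 = w := by
      ext x; simp
    rw [h'] at h
    rw [ηc_apply]
    exact_mod_cast congrArg (fun n : ℤ => (n : ℂ)) h
  have fiber : ∑ z : F, χ (t * z ^ 2) =
      ∑ w : F, ((univ.filter fun z : F => z ^ 2 = w).card : ℂ) * χ (t * w) := by
    calc ∑ z : F, χ (t * z ^ 2)
        = ∑ w : F, ∑ z ∈ univ.filter fun z : F => z ^ 2 = w, χ (t * z ^ 2) :=
          (Finset.sum_fiberwise univ (fun z : F => z ^ 2) (fun z => χ (t * z ^ 2))).symm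
      _ = ∑ w : F, ∑ _z ∈ univ.filter fun z : F => z ^ 2 = w, χ (t * w) := by
          refine Finset.sum_congr rfl fun w _ => Finset.sum_congr rfl fun z hz => ?_
          rw [(Finset.mem_filter.mp hz).2]
      _ = ∑ w : F, ((univ.filter fun z : F => z ^ 2 = w).card : ℂ) * χ (t * w) := by
          simp [Finset.sum_const, nsmul_eq_mul]
  rw [fiber]
  simp_rw [count, add_mul, one_mul, Finset.sum_add_distrib]
  rw [delta_sum χ hχ t, if_neg ht, add_zero]
  have sub2 : ∑ w : F, ηc F w * χ (t * w) = ∑ w : F, ηc F t * (ηc F w * χ w) := by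
    refine Fintype.sum_equiv (Equiv.mulLeft₀ t ht) _ _ (fun w => ?_)
    simp only [Equiv.mulLeft₀_apply]
    have hmul : ηc F (t * w) = ηc F t * ηc F w := map_mul _ _ _
    rw [hmul]
    have hr : ηc F t * (ηc F t * ηc F w * χ (t * w)) =
        (ηc F t * ηc F t) * (ηc F w * χ (t * w)) := by ring
    rw [hr, ηc_sq ht, one_mul]
  rw [sub2, ← Finset.mul_sum, gaussSum_def]

/-- The bilinear (s,u)-sum. -/
private lemma su_sum (χ : AddChar F ℂ) (hχ : χ ≠ 1) {t : F} (ht : t ≠ 0) (b c : F) :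
    ∑ s : F, ∑ u : F, χ (-(t * (s * u)) + (b * s + c * u)) =
      (Fintype.card F : ℂ) * χ (b * c * t⁻¹) := by
  rw [Finset.sum_comm]
  have step1 : ∀ u : F, ∑ s : F, χ (-(t * (s * u)) + (b * s + c * u)) =
      χ (c * u) * ∑ s : F, χ ((b - t * u) * s) := by
    intro u
    rw [Finset.mul_sum]
    refine Finset.sum_congr rfl fun s _ => ?_
    rw [← AddChar.map_add_eq_mul]
    congr 1
    ring
  simp_rw [step1, delta_sum χ hχ]
  have step2 : ∀ u : F, χ (c * u) * (if b - t * u = 0 then (Fintype.card F : ℂ) else 0) =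
      if u = t⁻¹ * b then χ (c * u) * (Fintype.card F : ℂ) else 0 := by
    intro u
    by_cases hu : u = t⁻¹ * b
    · rw [if_pos hu, if_pos]
      rw [hu, mul_inv_cancel_left₀ ht, sub_self]
    · have hne : b - t * u ≠ 0 := by
        rw [sub_ne_zero]
        intro h
        exact hu (by rw [h, inv_mul_cancel_left₀ ht])
      rw [if_neg hu, if_neg hne, mul_zero]
  simp_rw [step2]
  rw [Finset.sum_ite_eq' univ (t⁻¹ * b) (fun u => χ (c * u) * (Fintype.card F : ℂ))]
  rw [if_pos (Finset.mem_univ _), mul_comm]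
  congr 2
  ring

/-- The twisted sum evaluates to `η e` times the Gauss sum. -/
private lemma twisted_sum (hchar : ringChar F ≠ 2) (χ : AddChar F ℂ) (hχ : χ ≠ 1) (e : F) :
    ∑ t ∈ univ.erase (0 : F), ηc F t * χ (e * t⁻¹) =
      ηc F e * gaussSum (ηc F) χ := by
  by_cases he : e = 0
  · subst he
    rw [ηc_zero, zero_mul]
    have h : ∀ t ∈ univ.erase (0 : F), ηc F t * χ ((0 : F) * t⁻¹) = ηc F t := by
      intro t _
      rw [zero_mul, AddChar.map_zero_eq_one, mul_one]
    rw [Finset.sum_congr rfl h, Finset.sum_erase _ ηc_zero, ηc_sum_zero hchar]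
  · have key : ∑ t ∈ univ.erase (0 : F), ηc F t * χ (e * t⁻¹) =
        ∑ s ∈ univ.erase (0 : F), ηc F e * (ηc F s * χ s) := by
      refine Finset.sum_nbij' (fun t => e * t⁻¹) (fun s => e * s⁻¹) ?_ ?_ ?_ ?_ ?_
      · intro t ht
        rw [Finset.mem_erase] at ht ⊢
        exact ⟨mul_ne_zero he (inv_ne_zero ht.1), Finset.mem_univ _⟩
      · intro s hs
        rw [Finset.mem_erase] at hs ⊢
        exact ⟨mul_ne_zero he (inv_ne_zero hs.1), Finset.mem_univ _⟩
      · intro t ht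
        rw [Finset.mem_erase] at ht
        field_simp
      · intro s hs
        rw [Finset.mem_erase] at hs
        field_simp
      · intro t ht
        rw [Finset.mem_erase] at ht
        have hmul : ηc F (e * t⁻¹) = ηc F e * ηc F t := by
          rw [map_mul, ηc_inv ht.1]
        rw [hmul]
        have hr : ηc F e * (ηc F e * ηc F t * χ (e * t⁻¹)) =
            (ηc F e * ηc F e) * (ηc F t * χ (e * t⁻¹)) := by ring
        rw [hr, ηc_sq he, one_mul]
    rw [key, ← Finset.mul_sum]
    congr 1
    rw [Finset.sum_erase _ (by rw [AddChar.map_zero_eq_one, mul_one, ηc_zero]), gaussSum_def]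

/-- Full-space linear character sum. -/
private lemma lin_sum (χ : AddChar F ℂ) (hχ : χ ≠ 1) {ι : Type} [Fintype ι] [DecidableEq ι]
    (a : ι → F) :
    ∑ y : ι → F, χ (∑ i, a i * y i) =
      if a = 0 then (Fintype.card F : ℂ) ^ Fintype.card ι else 0 := by
  have h1 : ∀ y : ι → F, χ (∑ i, a i * y i) = ∏ i, χ (a i * y i) := fun y =>
    achar_sum_prod χ univ _
  simp_rw [h1]
  rw [show (∑ y : ι → F, ∏ i, χ (a i * y i)) = ∏ i, ∑ z : F, χ (a i * z) from
    (Fintype.prod_sum (fun (i : ι) (z : F) => χ (a i * z))).symm]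
  simp_rw [delta_sum χ hχ]
  by_cases ha : a = 0
  · simp [ha, Finset.card_univ]
  · rw [if_neg ha]
    obtain ⟨i, hi⟩ : ∃ i, a i ≠ 0 := by
      by_contra h
      push_neg at h
      exact ha (funext h)
    exact Finset.prod_eq_zero (Finset.mem_univ i) (if_neg hi)

/-- The master character-sum evaluation over the quadric `∑ yᵢ² = s·u`. -/
private lemma master_sum (hchar : ringChar F ≠ 2) {n : ℕ} (hn : Odd n)
    (χ : AddChar F ℂ) (hχ : χ ≠ 1) (m : (Fin n → F) × F × F) :
    (∑ x ∈ univ.filter (fun x : (Fin n → F) × F × F =>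
        ∑ i, (x.1 i) ^ 2 = x.2.1 * x.2.2),
      χ (∑ i, m.1 i * x.1 i + m.2.1 * x.2.1 + m.2.2 * x.2.2))
    = (if m = 0 then ((Fintype.card F : ℂ)) ^ (n + 1) else 0) +
      ηc F (m.2.1 * m.2.2 - (∑ i, (m.1 i) ^ 2) * (4 : F)⁻¹) *
        gaussSum (ηc F) χ ^ (n + 1) := by
  have h2 : (2 : F) ≠ 0 := Ring.two_ne_zero hchar
  have h4 : (4 : F) ≠ 0 := by
    have h : (4 : F) = 2 * 2 := by norm_num
    rw [h]
    exact mul_ne_zero h2 h2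
  obtain ⟨a, b, c⟩ := m
  dsimp only
  have hq : (Fintype.card F : ℂ) ≠ 0 := Nat.cast_ne_zero.mpr Fintype.card_ne_zero
  set q : ℂ := (Fintype.card F : ℂ) with hq_def
  set g : ℂ := gaussSum (ηc F) χ with hg_def
  set B : (Fin n → F) × F × F → F :=
    fun x => (∑ i, a i * x.1 i) + b * x.2.1 + c * x.2.2 with hB_def
  set r : (Fin n → F) × F × F → F :=
    fun x => (∑ i, (x.1 i) ^ 2) - x.2.1 * x.2.2 with hr_def
  -- Step A : multiply by q and open the delta
  have stepA : q * (∑ x ∈ univ.filter (fun x : (Fin n → F) × F × F =>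
        ∑ i, (x.1 i) ^ 2 = x.2.1 * x.2.2), χ (B x)) =
      ∑ t : F, ∑ x : (Fin n → F) × F × F, χ (r x * t + B x) := by
    rw [Finset.mul_sum, Finset.sum_filter, Finset.sum_comm]
    refine Finset.sum_congr rfl fun x _ => ?_
    have hsplit : ∀ t : F, χ (r x * t + B x) = χ (r x * t) * χ (B x) := fun t =>
      AddChar.map_add_eq_mul χ _ _
    simp_rw [hsplit]
    rw [← Finset.sum_mul, delta_sum χ hχ (r x)]
    have hrx : r x = (∑ i, (x.1 i) ^ 2) - x.2.1 * x.2.2 := rfl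
    by_cases hx : (∑ i, (x.1 i) ^ 2) = x.2.1 * x.2.2
    · rw [if_pos hx, if_pos (by rw [hrx, hx, sub_self])]
    · rw [if_neg hx, if_neg (fun hh => hx (sub_eq_zero.mp (hrx ▸ hh))), zero_mul]
  -- the t = 0 term
  have t0 : ∑ x : (Fin n → F) × F × F, χ (r x * 0 + B x) =
      if (a, b, c) = (0 : (Fin n → F) × F × F) then q ^ (n + 2) else 0 := by
    have h : ∀ x : (Fin n → F) × F × F, χ (r x * 0 + B x) = χ (B x) := fun x => by
      rw [mul_zero, zero_add]
    simp_rw [h]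
    rw [show (∑ x : (Fin n → F) × F × F, χ (B x)) =
        ∑ y : Fin n → F, ∑ s : F, ∑ u : F, χ (B (y, s, u)) by
      rw [Fintype.sum_prod_type]
      exact Finset.sum_congr rfl fun y _ => Fintype.sum_prod_type _]
    have hsplit : ∀ (y : Fin n → F) (s u : F),
        χ (B (y, s, u)) = χ (∑ i, a i * y i) * χ (b * s) * χ (c * u) := by
      intro y s u
      simp only [hB_def]
      rw [AddChar.map_add_eq_mul, AddChar.map_add_eq_mul]
    simp_rw [hsplit]
    have k1 : ∀ (y : Fin n → F) (s : F),
        ∑ u : F, χ (∑ i, a i * y i) * χ (b * s) * χ (c * u) =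
          χ (∑ i, a i * y i) * χ (b * s) * ∑ u : F, χ (c * u) := fun y s =>
      (Finset.mul_sum _ _ _).symm
    have k2 : ∀ y : Fin n → F,
        ∑ s : F, χ (∑ i, a i * y i) * χ (b * s) * (∑ u : F, χ (c * u)) =
          χ (∑ i, a i * y i) * (∑ s : F, χ (b * s)) * (∑ u : F, χ (c * u)) := by
      intro y
      rw [← Finset.sum_mul, ← Finset.mul_sum]
    simp_rw [k1, k2]
    rw [← Finset.sum_mul, ← Finset.sum_mul]
    rw [lin_sum χ hχ a, delta_sum χ hχ b, delta_sum χ hχ c]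
    by_cases hA : a = 0
    · by_cases hb : b = 0
      · by_cases hc : c = 0
        · rw [if_pos hA, if_pos hb, if_pos hc, if_pos (by simp [hA, hb, hc, Prod.ext_iff])]
          rw [Fintype.card_fin]
          ring
        · rw [if_neg hc, mul_zero, if_neg (by simp [Prod.ext_iff, hc])]
      · rw [if_neg hb, mul_zero, zero_mul, if_neg (by simp [Prod.ext_iff, hb])]
    · rw [if_neg hA, zero_mul, zero_mul, if_neg (by simp [Prod.ext_iff, hA])]
  -- the t ≠ 0 terms
  have tne : ∀ t : F, t ≠ 0 → ∑ x : (Fin n → F) × F × F, χ (r x * t + B x) =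
      (q * g ^ n) * (ηc F t * χ ((b * c - (∑ i, a i ^ 2) * (4 : F)⁻¹) * t⁻¹)) := by
    intro t ht
    rw [show (∑ x : (Fin n → F) × F × F, χ (r x * t + B x)) =
        ∑ y : Fin n → F, ∑ s : F, ∑ u : F, χ (r (y, s, u) * t + B (y, s, u)) by
      rw [Fintype.sum_prod_type]
      exact Finset.sum_congr rfl fun y _ => Fintype.sum_prod_type _]
    have harg : ∀ (y : Fin n → F) (s u : F),
        χ (r (y, s, u) * t + B (y, s, u)) =
          (∏ i, χ (t * (y i) ^ 2 + a i * y i)) *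
            χ (-(t * (s * u)) + (b * s + c * u)) := by
      intro y s u
      have harg' : r (y, s, u) * t + B (y, s, u) =
          (∑ i, (t * (y i) ^ 2 + a i * y i)) + (-(t * (s * u)) + (b * s + c * u)) := by
        simp only [hr_def, hB_def]
        rw [Finset.sum_add_distrib, sub_mul, Finset.sum_mul]
        have hcomm : ∑ i, (y i) ^ 2 * t = ∑ i, t * (y i) ^ 2 :=
          Finset.sum_congr rfl fun i _ => mul_comm _ _
        rw [hcomm]
        ring
      rw [harg', AddChar.map_add_eq_mul, achar_sum_prod]
    simp_rw [harg]
    have k1 : ∀ (y : Fin n → F) (s : F),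
        ∑ u : F, (∏ i, χ (t * (y i) ^ 2 + a i * y i)) *
            χ (-(t * (s * u)) + (b * s + c * u)) =
          (∏ i, χ (t * (y i) ^ 2 + a i * y i)) *
            ∑ u : F, χ (-(t * (s * u)) + (b * s + c * u)) := fun y s =>
      (Finset.mul_sum _ _ _).symm
    have k2 : ∀ y : Fin n → F,
        ∑ s : F, (∏ i, χ (t * (y i) ^ 2 + a i * y i)) *
            (∑ u : F, χ (-(t * (s * u)) + (b * s + c * u))) =
          (∏ i, χ (t * (y i) ^ 2 + a i * y i)) *
            ∑ s : F, ∑ u : F, χ (-(t * (s * u)) + (b * s + c * u)) := fun y =>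
      (Finset.mul_sum _ _ _).symm
    simp_rw [k1, k2]
    rw [← Finset.sum_mul, su_sum χ hχ ht b c]
    rw [show (∑ y : Fin n → F, ∏ i, χ (t * (y i) ^ 2 + a i * y i)) =
        ∏ i : Fin n, ∑ z : F, χ (t * z ^ 2 + a i * z) from
      (Fintype.prod_sum (fun (i : Fin n) (z : F) => χ (t * z ^ 2 + a i * z))).symm]
    have hprod : ∀ i : Fin n, (∑ z : F, χ (t * z ^ 2 + a i * z)) =
        χ (-(a i ^ 2) * (4 * t)⁻¹) * (ηc F t * g) := fun i => quad_sum hchar χ hχ ht (a i)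
    simp_rw [hprod]
    rw [Finset.prod_mul_distrib, Finset.prod_const, Finset.card_univ, Fintype.card_fin,
      ← achar_sum_prod χ univ]
    have hpow : (ηc F t * g) ^ n = ηc F t * g ^ n := by
      obtain ⟨k, hk⟩ := hn
      rw [mul_pow]
      congr 1
      rw [hk, pow_add, pow_one, pow_mul]
      have hsq : ηc F t ^ 2 = 1 := by rw [pow_two, ηc_sq ht]
      rw [hsq, one_pow, one_mul]
    rw [hpow]
    have hχarg : χ (∑ i, -(a i ^ 2) * (4 * t)⁻¹) * χ (b * c * t⁻¹) =
        χ ((b * c - (∑ i, a i ^ 2) * (4 : F)⁻¹) * t⁻¹) := by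
      rw [← AddChar.map_add_eq_mul]
      congr 1
      have hsum : ∑ i, -(a i ^ 2) * (4 * t)⁻¹ = -(∑ i, a i ^ 2) * (4 * t)⁻¹ := by
        rw [← Finset.sum_mul, Finset.sum_neg_distrib]
      rw [hsum]
      field_simp
      ring
    calc χ (∑ i, -(a i ^ 2) * (4 * t)⁻¹) * (ηc F t * g ^ n) * (q * χ (b * c * t⁻¹))
        = (q * g ^ n) * (ηc F t *
            (χ (∑ i, -(a i ^ 2) * (4 * t)⁻¹) * χ (b * c * t⁻¹))) := by ring
      _ = (q * g ^ n) * (ηc F t *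
            χ ((b * c - (∑ i, a i ^ 2) * (4 : F)⁻¹) * t⁻¹)) := by rw [hχarg]
  -- assemble
  set e : F := b * c - (∑ i, a i ^ 2) * (4 : F)⁻¹ with he_def
  have hsum : ∑ t : F, ∑ x : (Fin n → F) × F × F, χ (r x * t + B x) =
      (if (a, b, c) = (0 : (Fin n → F) × F × F) then q ^ (n + 2) else 0) +
        q * (ηc F e * g ^ (n + 1)) := by
    rw [← Finset.add_sum_erase _ _ (Finset.mem_univ (0 : F)), t0]
    congr 1
    have h : ∀ t ∈ univ.erase (0 : F),
        (∑ x : (Fin n → F) × F × F, χ (r x * t + B x)) =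
          (q * g ^ n) * (ηc F t * χ (e * t⁻¹)) := fun t ht =>
      tne t (Finset.mem_erase.mp ht).1
    rw [Finset.sum_congr rfl h, ← Finset.mul_sum, twisted_sum hchar χ hχ e]
    rw [pow_succ]
    ring
  have final : q * (∑ x ∈ univ.filter (fun x : (Fin n → F) × F × F =>
        ∑ i, (x.1 i) ^ 2 = x.2.1 * x.2.2), χ (B x)) =
      q * ((if (a, b, c) = (0 : (Fin n → F) × F × F) then q ^ (n + 1) else 0) +
        ηc F e * g ^ (n + 1)) := by
    rw [stepA, hsum, mul_add]
    congr 1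
    by_cases hm : (a, b, c) = (0 : (Fin n → F) × F × F)
    · rw [if_pos hm, if_pos hm]
      ring
    · rw [if_neg hm, if_neg hm, mul_zero]
  have hres := mul_left_cancel₀ hq final
  simp only [hB_def] at hres
  exact hres

end Aux

theorem conv_K_Linfty_bound
    (F : Type) [Field F] [Fintype F] [DecidableEq F]
    (hchar : ringChar F ≠ 2)
    (d : ℕ) (hd2 : 2 ≤ d) (hdeven : Even d)
    (χ : AddChar F ℂ) (hχ : χ ≠ 1)
    (K : ((Fin (d - 1) → F) × F × F) → ℂ)
    (hK : ∀ m : (Fin (d - 1) → F) × F × F,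
      K m = (((univ.filter (fun x : (Fin (d - 1) → F) × F × F =>
                ∑ i, (x.1 i) ^ 2 = x.2.1 * x.2.2)).card : ℂ))⁻¹ *
              (∑ x ∈ univ.filter (fun x : (Fin (d - 1) → F) × F × F =>
                  ∑ i, (x.1 i) ^ 2 = x.2.1 * x.2.2),
                χ (∑ i, m.1 i * x.1 i + m.2.1 * x.2.1 + m.2.2 * x.2.2)) -
            (if m = 0 then 1 else 0))
    (G : ((Fin (d - 1) → F) × F × F) → ℂ)
    (m : (Fin (d - 1) → F) × F × F) :
    ‖∑ n : (Fin (d - 1) → F) × F × F, G n * K (m - n)‖ ≤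
      (Fintype.card F : ℝ) ^ (-(d : ℝ) / 2) *
        ∑ n : (Fin (d - 1) → F) × F × F, ‖G n‖ := by
  have hn : Odd (d - 1) := Nat.Even.sub_odd (by omega) hdeven odd_one
  have hd1 : d - 1 + 1 = d := by omega
  have hQpos : 0 < Fintype.card F := Fintype.card_pos
  have hQR : (0 : ℝ) < (Fintype.card F : ℝ) := by exact_mod_cast hQpos
  have hqC : (Fintype.card F : ℂ) ≠ 0 := Nat.cast_ne_zero.mpr Fintype.card_ne_zero
  -- modulus of the Gauss sum
  have hηne : ηc F ≠ 1 :=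
    (MulChar.ringHomComp_ne_one_iff (Int.cast_injective)).mpr (quadraticChar_ne_one hchar)
  have habs2 : ‖gaussSum (ηc F) χ‖ ^ 2 = (Fintype.card F : ℝ) := by
    have hq2 : (ηc F).IsQuadratic := (quadraticChar_isQuadratic F).comp _
    have hgsq := gaussSum_sq hηne hq2 (AddChar.IsPrimitive.of_ne_one hχ)
    have hone : ‖ηc F (-1)‖ = 1 := by
      have hne : (-1 : F) ≠ 0 := by
        simp
      have hη := ηc_sq hne
      have h2 : ‖ηc F (-1)‖ * ‖ηc F (-1)‖ = 1 := by
        rw [← norm_mul, hη, norm_one]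
      nlinarith [norm_nonneg (ηc F (-1))]
    calc ‖gaussSum (ηc F) χ‖ ^ 2
        = ‖gaussSum (ηc F) χ ^ 2‖ := (norm_pow _ _).symm
      _ = ‖ηc F (-1)‖ * ‖(Fintype.card F : ℂ)‖ := by
          rw [hgsq, norm_mul]
      _ = (Fintype.card F : ℝ) := by rw [hone, one_mul, Complex.norm_natCast]
  -- the cardinality of the quadric
  have hcard : (((univ.filter (fun x : (Fin (d - 1) → F) × F × F =>
      ∑ i, (x.1 i) ^ 2 = x.2.1 * x.2.2)).card : ℂ)) = (Fintype.card F : ℂ) ^ d := by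
    have h0 := master_sum hchar hn χ hχ (0 : (Fin (d - 1) → F) × F × F)
    simp only [Prod.fst_zero, Prod.snd_zero, Pi.zero_apply, zero_mul, mul_zero,
      Finset.sum_const_zero, add_zero, zero_add, AddChar.map_zero_eq_one,
      if_true, ne_eq, OfNat.ofNat_ne_zero, not_false_eq_true, zero_pow, sub_zero,
      sub_self, ηc_zero, zero_sub, neg_zero] at h0
    rw [hd1] at h0
    simpa using h0
  -- the pointwise bound on K
  have hbound : ∀ x : (Fin (d - 1) → F) × F × F,
      ‖K x‖ ≤ (Fintype.card F : ℝ) ^ (-(d : ℝ) / 2) := by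
    intro x
    have hrpos : 0 < (Fintype.card F : ℝ) ^ (-(d : ℝ) / 2) := Real.rpow_pos_of_pos hQR _
    by_cases hx : x = 0
    · subst hx
      have hS : (∑ x ∈ univ.filter (fun x : (Fin (d - 1) → F) × F × F =>
            ∑ i, (x.1 i) ^ 2 = x.2.1 * x.2.2),
          χ (∑ i, (0 : (Fin (d - 1) → F) × F × F).1 i * x.1 i +
            (0 : (Fin (d - 1) → F) × F × F).2.1 * x.2.1 +
            (0 : (Fin (d - 1) → F) × F × F).2.2 * x.2.2)) =
          (((univ.filter (fun x : (Fin (d - 1) → F) × F × F =>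
            ∑ i, (x.1 i) ^ 2 = x.2.1 * x.2.2)).card : ℂ)) := by
        rw [show (∑ x ∈ univ.filter (fun x : (Fin (d - 1) → F) × F × F =>
            ∑ i, (x.1 i) ^ 2 = x.2.1 * x.2.2),
          χ (∑ i, (0 : (Fin (d - 1) → F) × F × F).1 i * x.1 i +
            (0 : (Fin (d - 1) → F) × F × F).2.1 * x.2.1 +
            (0 : (Fin (d - 1) → F) × F × F).2.2 * x.2.2)) =
            ∑ _x ∈ univ.filter (fun x : (Fin (d - 1) → F) × F × F =>
            ∑ i, (x.1 i) ^ 2 = x.2.1 * x.2.2), (1 : ℂ) from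
          Finset.sum_congr rfl fun x _ => by simp]
        simp
      rw [hK 0, hS, hcard, inv_mul_cancel₀ (pow_ne_zero _ hqC), if_pos rfl, sub_self,
        norm_zero]
      exact le_of_lt hrpos
    · rw [hK x]
      have hm := master_sum hchar hn χ hχ x
      rw [if_neg hx] at hm
      rw [hm, hcard, if_neg hx, sub_zero, zero_add, hd1]
      obtain ⟨k, hk⟩ := hdeven
      have hgd : ‖gaussSum (ηc F) χ‖ ^ d = (Fintype.card F : ℝ) ^ k := by
        rw [hk, ← two_mul, pow_mul, habs2]
      have hQk : ((Fintype.card F : ℝ) ^ k) ≠ 0 := pow_ne_zero _ (ne_of_gt hQR)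
      have hval : ((Fintype.card F : ℝ) ^ d)⁻¹ * (Fintype.card F : ℝ) ^ k =
          (Fintype.card F : ℝ) ^ (-(d : ℝ) / 2) := by
        rw [show (-(d : ℝ) / 2) = -(k : ℝ) by rw [hk]; push_cast; ring]
        rw [Real.rpow_neg (le_of_lt hQR), Real.rpow_natCast]
        rw [hk, ← two_mul, pow_mul, pow_two, mul_pow, mul_inv, mul_assoc,
          inv_mul_cancel₀ hQk, mul_one]
      calc ‖((Fintype.card F : ℂ) ^ d)⁻¹ *
            (ηc F (x.2.1 * x.2.2 - (∑ i, (x.1 i) ^ 2) * (4 : F)⁻¹) *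
              gaussSum (ηc F) χ ^ d)‖
          = ((Fintype.card F : ℝ) ^ d)⁻¹ *
              (‖ηc F (x.2.1 * x.2.2 - (∑ i, (x.1 i) ^ 2) * (4 : F)⁻¹)‖ *
                ‖gaussSum (ηc F) χ‖ ^ d) := by
            rw [norm_mul, norm_mul, norm_inv, norm_pow, norm_pow, Complex.norm_natCast]
        _ ≤ ((Fintype.card F : ℝ) ^ d)⁻¹ * (1 * ‖gaussSum (ηc F) χ‖ ^ d) := by
            refine mul_le_mul_of_nonneg_left ?_ (by positivity)
            exact mul_le_mul_of_nonneg_right (ηc_abs_le_one _) (by positivity)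
        _ = (Fintype.card F : ℝ) ^ (-(d : ℝ) / 2) := by
            rw [one_mul, hgd, hval]
  -- final assembly
  calc ‖∑ n : (Fin (d - 1) → F) × F × F, G n * K (m - n)‖
      ≤ ∑ n : (Fin (d - 1) → F) × F × F, ‖G n * K (m - n)‖ :=
        norm_sum_le _ _
    _ = ∑ n : (Fin (d - 1) → F) × F × F, ‖G n‖ * ‖K (m - n)‖ := by
        simp_rw [norm_mul]
    _ ≤ ∑ n : (Fin (d - 1) → F) × F × F,
          ‖G n‖ * ((Fintype.card F : ℝ) ^ (-(d : ℝ) / 2)) :=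
        Finset.sum_le_sum fun n _ =>
          mul_le_mul_of_nonneg_left (hbound _) (norm_nonneg _)
    _ = (Fintype.card F : ℝ) ^ (-(d : ℝ) / 2) *
          ∑ n : (Fin (d - 1) → F) × F × F, ‖G n‖ := by
        rw [← Finset.sum_mul, mul_comm]
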